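/- arXiv:2601.15398 — 8 statements merged into one kernel-verified Lean document; each statement's English description precedes it below -/
import Mathlib

section
/- If (t_k) is the FISTA parameter sequence (satisfying t_0 = 1, t_k ≥ (k+2)/2, t_k² ≥ t_{k+1}² − t_{k+1}), then the series ∑_{k≥2} 1/(t_k − 1) diverges to +∞. -/
open Filter

theorem fista_param_series_diverges (t : ℕ → ℝ)
    (hpos : ∀ k, 0 < t k) (ht0 : t 0 = 1)
    (hlow : ∀ k : ℕ, ((k : ℝ) + 2) / 2 ≤ t k)
    (hrec : ∀ k : ℕ, (t (k + 1)) ^ 2 - t (k + 1) ≤ (t k) ^ 2) :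
    Tendsto (fun n : ℕ => ∑ k ∈ Finset.Icc 2 n, 1 / (t k - 1)) atTop atTop := by
  -- upper bound: t k ≤ k + 1
  have hub : ∀ k : ℕ, t k ≤ (k : ℝ) + 1 := by
    intro k
    induction k with
    | zero => simp [ht0]
    | succ n ih =>
      have h1 : t (n + 1) ≤ t n + 1 := by
        nlinarith [hrec n, hpos n, hpos (n + 1)]
      push_cast
      linarith
  -- lower bound on t k - 1 for k ≥ 2
  have hgt : ∀ k : ℕ, 2 ≤ k → (1 : ℝ) ≤ t k - 1 := by
    intro k hk
    have := hlow k
    have : ((k : ℝ) + 2) / 2 ≤ t k := this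
    have hk' : (2 : ℝ) ≤ (k : ℝ) := by exact_mod_cast hk
    linarith
  set g : ℕ → ℝ := fun i => 1 / (t (2 + i) - 1) with hg
  have hgnn : ∀ i, 0 ≤ g i := by
    intro i
    have := hgt (2 + i) (by omega)
    positivity
  have hns : ¬ Summable g := by
    intro hs
    have hcomp : Summable (fun i : ℕ => 1 / ((i : ℝ) + 3)) := by
      apply Summable.of_nonneg_of_le (fun i => by positivity) _ hs
      intro i
      have h1 : (1 : ℝ) ≤ t (2 + i) - 1 := hgt (2 + i) (by omega)
      have h2 : t (2 + i) - 1 ≤ (i : ℝ) + 2 := by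
        have := hub (2 + i)
        push_cast at this ⊢
        linarith
      have h3 : (0 : ℝ) < t (2 + i) - 1 := by linarith
      calc (1 : ℝ) / ((i : ℝ) + 3) ≤ 1 / (t (2 + i) - 1) := by
            apply one_div_le_one_div_of_le h3
            linarith
        _ = g i := rfl
    have : Summable (fun n : ℕ => 1 / (n : ℝ)) := by
      rw [← summable_nat_add_iff 3]
      apply hcomp.congr
      intro i
      push_cast
      ring
    exact Real.not_summable_one_div_natCast this
  have hS : Tendsto (fun m : ℕ => ∑ i ∈ Finset.range m, g i) atTop atTop :=
    (not_summable_iff_tendsto_nat_atTop_of_nonneg hgnn).mp hns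
  have hEq : ∀ n : ℕ, ∑ k ∈ Finset.Icc 2 n, 1 / (t k - 1)
      = ∑ i ∈ Finset.range (n - 1), g i := by
    intro n
    rw [← Finset.Ico_add_one_right_eq_Icc, Finset.sum_Ico_eq_sum_range]
    congr 1
  have hcomp : Tendsto (fun n : ℕ => n - 1) atTop atTop := tendsto_sub_atTop_nat 1
  exact (hS.comp hcomp).congr fun n => (hEq n).symm
end

section
/- Let (φ_k) be a sequence of positive reals with ∑_k 1/φ_k = +∞, and let (h_k) be a sequence of reals such that g_k := h_{k+1} + φ_k(h_{k+1} − h_k) converges to a real number ℓ. Then h_k → ℓ. -/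
open Filter

theorem bcch_lemma_finite (φ h : ℕ → ℝ) (ℓ : ℝ)
    (hφ : ∀ k, 0 < φ k)
    (hdiv : Tendsto (fun n : ℕ => ∑ k ∈ Finset.range n, 1 / φ k) atTop atTop)
    (hg : Tendsto (fun k => h (k + 1) + φ k * (h (k + 1) - h k)) atTop (nhds ℓ)) :
    Tendsto h atTop (nhds ℓ) := by
  have h1φ : ∀ k, (0:ℝ) < 1 + φ k := fun k => by linarith [hφ k]
  set g : ℕ → ℝ := fun k => h (k + 1) + φ k * (h (k + 1) - h k) with hgdef
  have hrec : ∀ k, h (k + 1) - ℓ =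
      (φ k / (1 + φ k)) * (h k - ℓ) + (1 / (1 + φ k)) * (g k - ℓ) := by
    intro k
    have hne := (h1φ k).ne'
    simp only [hgdef]
    field_simp
    ring
  -- key estimate
  have key : ∀ ε : ℝ, 0 < ε → ∀ N : ℕ, (∀ k, N ≤ k → |g k - ℓ| ≤ ε) → ∀ m : ℕ,
      |h (N + m) - ℓ| ≤
        (∏ j ∈ Finset.range m, (φ (N + j) / (1 + φ (N + j)))) * |h N - ℓ| + ε := by
    intro ε hε N hN m
    induction m with
    | zero => simp [le_of_lt hε]
    | succ m ih =>
      rw [← Nat.add_assoc]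
      have hl1 : (0:ℝ) < φ (N + m) / (1 + φ (N + m)) :=
        div_pos (hφ _) (h1φ _)
      have hl2 : (0:ℝ) < 1 / (1 + φ (N + m)) := div_pos one_pos (h1φ _)
      have hsum : φ (N + m) / (1 + φ (N + m)) + 1 / (1 + φ (N + m)) = 1 := by
        rw [← add_div, div_eq_one_iff_eq (h1φ _).ne']
        ring
      have h2 : |h (N + m + 1) - ℓ| ≤
          (φ (N + m) / (1 + φ (N + m))) * |h (N + m) - ℓ|
            + (1 / (1 + φ (N + m))) * ε := by
        rw [hrec (N + m)]
        calc |(φ (N + m) / (1 + φ (N + m))) * (h (N + m) - ℓ)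
              + (1 / (1 + φ (N + m))) * (g (N + m) - ℓ)|
            ≤ |(φ (N + m) / (1 + φ (N + m))) * (h (N + m) - ℓ)|
              + |(1 / (1 + φ (N + m))) * (g (N + m) - ℓ)| := abs_add_le _ _
          _ = (φ (N + m) / (1 + φ (N + m))) * |h (N + m) - ℓ|
              + (1 / (1 + φ (N + m))) * |g (N + m) - ℓ| := by
                rw [abs_mul, abs_mul, abs_of_pos hl1, abs_of_pos hl2]
          _ ≤ (φ (N + m) / (1 + φ (N + m))) * |h (N + m) - ℓ|
              + (1 / (1 + φ (N + m))) * ε := by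
                gcongr
                exact hN (N + m) (Nat.le_add_right _ _)
      rw [Finset.prod_range_succ]
      have h3 := mul_le_mul_of_nonneg_left ih hl1.le
      have h7 : φ (N + m) / (1 + φ (N + m)) * ε + 1 / (1 + φ (N + m)) * ε = ε := by
        rw [← add_mul, hsum, one_mul]
      nlinarith [h2, h3, h7]
  -- product tends to zero
  have hprod : ∀ N : ℕ, Tendsto
      (fun m => ∏ j ∈ Finset.range m, (φ (N + j) / (1 + φ (N + j)))) atTop (nhds 0) := by
    intro N
    have hPeq : (fun m => ∏ j ∈ Finset.range m, (φ (N + j) / (1 + φ (N + j))))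
        = fun m => (∏ j ∈ Finset.range m, (1 + 1 / φ (N + j)))⁻¹ := by
      funext m
      rw [← Finset.prod_inv_distrib]
      refine Finset.prod_congr rfl fun j _ => ?_
      have hb := (hφ (N + j)).ne'
      have hc := (h1φ (N + j)).ne'
      rw [eq_comm, inv_eq_iff_eq_inv]
      field_simp
      ring
    rw [hPeq]
    have hlb : ∀ m : ℕ, 1 + ∑ j ∈ Finset.range m, 1 / φ (N + j)
        ≤ ∏ j ∈ Finset.range m, (1 + 1 / φ (N + j)) := by
      intro m
      induction m with
      | zero => simp
      | succ m ih =>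
        rw [Finset.sum_range_succ, Finset.prod_range_succ]
        have h1 : (0:ℝ) < 1 / φ (N + m) := one_div_pos.mpr (hφ _)
        have h2 : (0:ℝ) ≤ ∑ j ∈ Finset.range m, 1 / φ (N + j) :=
          Finset.sum_nonneg fun j _ => (one_div_pos.mpr (hφ _)).le
        nlinarith
    have hsumT : Tendsto (fun m => ∑ j ∈ Finset.range m, 1 / φ (N + j)) atTop atTop := by
      have heq : (fun m => ∑ j ∈ Finset.range m, 1 / φ (N + j))
          = fun m => (∑ k ∈ Finset.range (N + m), 1 / φ k) - ∑ k ∈ Finset.range N, 1 / φ k := by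
        funext m
        rw [eq_sub_iff_add_eq, add_comm]
        rw [Finset.sum_range_add]
      rw [heq]
      apply tendsto_atTop_add_const_right
      exact hdiv.comp ((tendsto_add_atTop_nat N).congr fun m => Nat.add_comm m N)
    have hQ : Tendsto (fun m => ∏ j ∈ Finset.range m, (1 + 1 / φ (N + j))) atTop atTop :=
      tendsto_atTop_mono hlb (tendsto_atTop_add_const_left _ 1 hsumT)
    exact hQ.inv_tendsto_atTop
  -- assemble
  rw [Metric.tendsto_atTop]
  intro ε hε
  obtain ⟨N, hN⟩ := Metric.tendsto_atTop.mp hg (ε / 4) (by positivity)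
  have hgN : ∀ k, N ≤ k → |g k - ℓ| ≤ ε / 4 := by
    intro k hk
    have := hN k hk
    rw [Real.dist_eq] at this
    exact this.le
  have hkey := key (ε / 4) (by positivity) N hgN
  set X := |h N - ℓ| with hX
  have hXpos : (0:ℝ) ≤ X := abs_nonneg _
  have hX1 : (0:ℝ) < X + 1 := by linarith
  obtain ⟨M, hM⟩ := Metric.tendsto_atTop.mp (hprod N) (ε / (2 * (X + 1)))
    (div_pos hε (by linarith))
  refine ⟨N + M, fun k hk => ?_⟩
  obtain ⟨m, rfl⟩ : ∃ m, k = N + m := ⟨k - N, by omega⟩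
  have hmM : M ≤ m := by omega
  have hP := hM m hmM
  rw [Real.dist_eq, sub_zero] at hP
  have hPnonneg : (0:ℝ) ≤ ∏ j ∈ Finset.range m, (φ (N + j) / (1 + φ (N + j))) :=
    Finset.prod_nonneg fun j _ => (div_pos (hφ _) (h1φ _)).le
  rw [abs_of_nonneg hPnonneg] at hP
  have h4 := hkey m
  have h5 : (∏ j ∈ Finset.range m, (φ (N + j) / (1 + φ (N + j)))) * X
      ≤ (∏ j ∈ Finset.range m, (φ (N + j) / (1 + φ (N + j)))) * (X + 1) := by
    gcongr; linarith
  have h6 : (∏ j ∈ Finset.range m, (φ (N + j) / (1 + φ (N + j)))) * (X + 1) < ε / 2 := by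
    have h9 := mul_lt_mul_of_pos_right hP hX1
    have heq2 : ε / (2 * (X + 1)) * (X + 1) = ε / 2 := by
      field_simp
    linarith
  rw [Real.dist_eq]
  linarith
end

section
/- Let (φ_k) be a sequence of positive reals with ∑_k 1/φ_k = +∞, and let (h_k) be a sequence of reals such that g_k := h_{k+1} + φ_k(h_{k+1} − h_k) tends to +∞. Then h_k → +∞. -/
open Filter

theorem bcch_lemma_top (φ h : ℕ → ℝ)
    (hφ : ∀ k, 0 < φ k)
    (hdiv : Tendsto (fun n : ℕ => ∑ k ∈ Finset.range n, 1 / φ k) atTop atTop)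
    (hg : Tendsto (fun k => h (k + 1) + φ k * (h (k + 1) - h k)) atTop atTop) :
    Tendsto h atTop atTop := by
  have hφ1 : ∀ k, (0:ℝ) < 1 + φ k := fun k => by linarith [hφ k]
  set a : ℕ → ℝ := fun k => 1 / (1 + φ k) with ha
  have ha_pos : ∀ k, 0 < a k := fun k => div_pos one_pos (hφ1 k)
  -- 1/φ is not summable
  have hns : ¬ Summable (fun k => 1 / φ k) :=
    (not_summable_iff_tendsto_nat_atTop_of_nonneg
      (fun k => (div_pos one_pos (hφ k)).le)).mpr hdiv
  -- a is not summable
  have hnsa : ¬ Summable a := by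
    intro hsa
    have h0 : Tendsto a atTop (nhds 0) := hsa.tendsto_atTop_zero
    have hev : ∀ᶠ k in atTop, a k < 1/2 :=
      h0.eventually_lt_const (by norm_num)
    obtain ⟨N, hN⟩ := eventually_atTop.mp hev
    apply hns
    rw [← summable_nat_add_iff N]
    have hsa' : Summable (fun k => 2 * a (k + N)) :=
      ((summable_nat_add_iff N).mpr hsa).mul_left 2
    refine Summable.of_nonneg_of_le (fun k => (div_pos one_pos (hφ _)).le) (fun k => ?_) hsa'
    have hk : a (k + N) < 1/2 := hN (k + N) (Nat.le_add_left _ _)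
    have h1 : 1 ≤ φ (k + N) := by
      have h2 := hφ1 (k + N)
      rw [ha] at hk
      simp only at hk
      rw [div_lt_iff₀ h2] at hk
      linarith
    have : 1 / φ (k + N) ≤ 2 / (1 + φ (k + N)) := by
      rw [div_le_div_iff₀ (hφ _) (hφ1 _)]; linarith
    calc 1 / φ (k + N) ≤ 2 / (1 + φ (k + N)) := this
      _ = 2 * a (k + N) := by rw [ha]; ring
  -- partial sums of a tend to infinity
  have hSa : Tendsto (fun n : ℕ => ∑ k ∈ Finset.range n, a k) atTop atTop :=
    (not_summable_iff_tendsto_nat_atTop_of_nonneg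
      (fun k => (ha_pos k).le)).mp hnsa
  rw [tendsto_atTop]
  intro M
  obtain ⟨N, hN⟩ := eventually_atTop.mp (hg.eventually_ge_atTop (M + 1))
  set e : ℕ → ℝ := fun k => max (M + 1 - h k) 0 with he
  have he_nonneg : ∀ k, 0 ≤ e k := fun k => le_max_right _ _
  -- key recursive estimate
  have step : ∀ k, N ≤ k → e (k + 1) ≤ e k * (φ k / (1 + φ k)) := by
    intro k hk
    have hgk : M + 1 ≤ h (k + 1) + φ k * (h (k + 1) - h k) := hN k hk
    have hek : M + 1 - h k ≤ e k := le_max_left _ _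
    have h2 : M + 1 - h (k + 1) ≤ e k * (φ k / (1 + φ k)) := by
      rw [mul_div_assoc' , le_div_iff₀ (hφ1 k)]
      nlinarith [hφ k, mul_le_mul_of_nonneg_left hek (hφ k).le]
    have h3 : 0 ≤ e k * (φ k / (1 + φ k)) :=
      mul_nonneg (he_nonneg k) (div_nonneg (hφ k).le (hφ1 k).le)
    exact max_le h2 h3
  -- iterate
  have ind : ∀ n, e (N + n) ≤ e N * ∏ j ∈ Finset.range n, (φ (N + j) / (1 + φ (N + j))) := by
    intro n
    induction n with
    | zero => simp
    | succ n ih =>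
      rw [Finset.prod_range_succ, ← mul_assoc]
      have hstep := step (N + n) (Nat.le_add_right _ _)
      have : e (N + (n + 1)) = e ((N + n) + 1) := by rw [Nat.add_assoc]
      rw [this]
      refine hstep.trans ?_
      exact mul_le_mul_of_nonneg_right ih (div_nonneg (hφ _).le (hφ1 _).le)
  -- product bounded by exponential
  have prodle : ∀ n, ∏ j ∈ Finset.range n, (φ (N + j) / (1 + φ (N + j)))
      ≤ Real.exp (-∑ j ∈ Finset.range n, a (N + j)) := by
    intro n
    rw [← Finset.sum_neg_distrib, Real.exp_sum]
    refine Finset.prod_le_prod (fun j _ => div_nonneg (hφ _).le (hφ1 _).le) ?_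
    intro j _
    have h1 : φ (N + j) / (1 + φ (N + j)) = 1 - a (N + j) := by
      rw [ha]; rw [eq_sub_iff_add_eq, ← add_div, add_comm, div_self (hφ1 _).ne']
    rw [h1]
    have := Real.add_one_le_exp (-(a (N + j)))
    linarith
  -- tail sums tend to infinity
  have htail : Tendsto (fun n : ℕ => ∑ j ∈ Finset.range n, a (N + j)) atTop atTop := by
    have heq : ∀ n : ℕ, ∑ j ∈ Finset.range n, a (N + j)
        = (∑ k ∈ Finset.range (N + n), a k) + (-(∑ k ∈ Finset.range N, a k)) := by
      intro n
      rw [Finset.sum_range_add]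
      ring
    simp only [heq]
    have hNn : Tendsto (fun n : ℕ => N + n) atTop atTop := by
      simpa [Nat.add_comm] using tendsto_add_atTop_nat N
    exact tendsto_atTop_add_const_right _ _ (hSa.comp hNn)
  -- so e (N + n) tends to 0 (bounded above by something going to 0)
  have hexp : Tendsto (fun n : ℕ => e N * Real.exp (-∑ j ∈ Finset.range n, a (N + j)))
      atTop (nhds 0) := by
    have : Tendsto (fun n : ℕ => Real.exp (-∑ j ∈ Finset.range n, a (N + j)))
        atTop (nhds 0) :=
      Real.tendsto_exp_atBot.comp (tendsto_neg_atTop_atBot.comp htail)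
    simpa using this.const_mul (e N)
  have hev : ∀ᶠ n : ℕ in atTop, e N * Real.exp (-∑ j ∈ Finset.range n, a (N + j)) < 1 :=
    hexp.eventually_lt_const (by norm_num)
  obtain ⟨n0, hn0⟩ := eventually_atTop.mp hev
  rw [eventually_atTop]
  refine ⟨N + n0, fun k hk => ?_⟩
  have hkN : N ≤ k := le_trans (Nat.le_add_right _ _) hk
  obtain ⟨n, rfl⟩ := Nat.exists_eq_add_of_le hkN
  have hn : n0 ≤ n := by omega
  have h1 : e (N + n) ≤ e N * Real.exp (-∑ j ∈ Finset.range n, a (N + j)) :=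
    (ind n).trans (mul_le_mul_of_nonneg_left (prodle n) (he_nonneg N))
  have h2 : e (N + n) < 1 := lt_of_le_of_lt h1 (hn0 n hn)
  have h3 : M + 1 - h (N + n) ≤ e (N + n) := le_max_left _ _
  linarith
end

section
/- Define φ_k := k for k ≥ 1, ℓ ∈ ℝ, h_k := ℓ + (−1)^k/k, and g_k := h_{k+1} + φ_k(h_{k+1} − h_k). Then h_k → ℓ but g_k = ℓ + 2·(−1)^{k+1}, so (g_k) does not converge to ℓ. -/
open Filter

theorem bcch_converse_fails_bounded (ℓ : ℝ) (h g : ℕ → ℝ)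
    (hh : ∀ k : ℕ, h k = ℓ + (-1 : ℝ) ^ k / (k : ℝ))
    (hg : ∀ k : ℕ, g k = h (k + 1) + (k : ℝ) * (h (k + 1) - h k)) :
    Tendsto h atTop (nhds ℓ) ∧
    (∀ k : ℕ, 1 ≤ k → g k = ℓ + 2 * (-1 : ℝ) ^ (k + 1)) ∧
    ¬ Tendsto g atTop (nhds ℓ) := by
  have hgval : ∀ k : ℕ, 1 ≤ k → g k = ℓ + 2 * (-1 : ℝ) ^ (k + 1) := by
    intro k hk
    have hk0 : (k : ℝ) ≠ 0 := Nat.cast_ne_zero.mpr (by omega)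
    have hk1 : ((k : ℝ) + 1) ≠ 0 := by positivity
    rw [hg k, hh (k + 1), hh k]
    push_cast
    field_simp
    ring
  refine ⟨?_, hgval, ?_⟩
  · have h0 : Tendsto (fun k : ℕ => (-1 : ℝ) ^ k / (k : ℝ)) atTop (nhds 0) := by
      refine squeeze_zero_norm (fun n => ?_) tendsto_one_div_atTop_nhds_zero_nat
      rw [norm_div, norm_pow, norm_neg, norm_one, one_pow, Real.norm_natCast]
    have := (tendsto_const_nhds (x := ℓ) (f := atTop)).add h0
    simpa only [add_zero] using this.congr (fun k => (hh k).symm)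
  · intro hT
    rw [Metric.tendsto_atTop] at hT
    obtain ⟨N, hN⟩ := hT 1 one_pos
    have hd := hN (N + 1) (by omega)
    rw [hgval (N + 1) (by omega), Real.dist_eq] at hd
    have : |2 * (-1 : ℝ) ^ (N + 1 + 1)| = 2 := by
      rw [abs_mul, abs_pow, abs_neg, abs_one, one_pow]
      norm_num
    simp only [add_sub_cancel_left] at hd
    rw [this] at hd
    linarith
end

section
/- Define φ_k := k for k ≥ 1, ℓ ∈ ℝ, h_k := ℓ + (−1)^k/√k, and g_k := h_{k+1} + φ_k(h_{k+1} − h_k). Then h_k → ℓ but g_k = ℓ + (−1)^{k+1}(√(k+1) + √k), so (g_k) is unbounded and does not converge to ℓ. -/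
open Filter

theorem bcch_converse_fails_unbounded (ℓ : ℝ) (h g : ℕ → ℝ)
    (hh : ∀ k : ℕ, h k = ℓ + (-1 : ℝ) ^ k / Real.sqrt k)
    (hg : ∀ k : ℕ, g k = h (k + 1) + (k : ℝ) * (h (k + 1) - h k)) :
    Tendsto h atTop (nhds ℓ) ∧
    (∀ k : ℕ, 1 ≤ k →
      g k = ℓ + (-1 : ℝ) ^ (k + 1) * (Real.sqrt (k + 1) + Real.sqrt k)) ∧
    (¬ ∃ M : ℝ, ∀ k : ℕ, |g k| ≤ M) ∧
    ¬ Tendsto g atTop (nhds ℓ) := by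
  -- Part 1
  have hsq : Tendsto (fun k : ℕ => Real.sqrt k) atTop atTop := by
    apply Filter.tendsto_atTop_atTop.mpr
    intro b
    refine ⟨⌈b⌉₊ ^ 2, fun n hn => ?_⟩
    calc b ≤ (⌈b⌉₊ : ℝ) := Nat.le_ceil b
      _ = Real.sqrt ((⌈b⌉₊ : ℝ) ^ 2) := by rw [Real.sqrt_sq (by positivity)]
      _ ≤ Real.sqrt n := Real.sqrt_le_sqrt (by exact_mod_cast hn)
  have h0 : Tendsto (fun k : ℕ => (-1:ℝ)^k / Real.sqrt k) atTop (nhds 0) := by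
    refine squeeze_zero_norm (a := fun k : ℕ => (Real.sqrt k)⁻¹) (fun k => ?_) hsq.inv_tendsto_atTop
    rw [norm_div, norm_pow, norm_neg, norm_one, one_pow, div_eq_mul_inv, one_mul,
      Real.norm_eq_abs, abs_of_nonneg (Real.sqrt_nonneg _)]
  have part1 : Tendsto h atTop (nhds ℓ) := by
    have := h0.const_add ℓ
    simpa using this.congr (fun k => (hh k).symm)
  have part2 : ∀ k : ℕ, 1 ≤ k →
      g k = ℓ + (-1 : ℝ) ^ (k + 1) * (Real.sqrt (k + 1) + Real.sqrt k) := by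
    intro k hk
    have hk0 : (0:ℝ) < k := by exact_mod_cast hk
    have hs : (0:ℝ) < Real.sqrt k := Real.sqrt_pos.mpr hk0
    have hs1 : (0:ℝ) < Real.sqrt ((k:ℝ)+1) := Real.sqrt_pos.mpr (by linarith)
    have hq : Real.sqrt k * Real.sqrt k = (k:ℝ) := Real.mul_self_sqrt hk0.le
    have hq1 : Real.sqrt ((k:ℝ)+1) * Real.sqrt ((k:ℝ)+1) = (k:ℝ)+1 :=
      Real.mul_self_sqrt (by linarith)
    rw [hg, hh, hh]
    push_cast
    rw [pow_succ]
    field_simp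
    linear_combination ((-1:ℝ)^k * Real.sqrt ((k:ℝ)+1)) * hq +
      ((-1:ℝ)^k * Real.sqrt k) * hq1
  have part3 : ¬ ∃ M : ℝ, ∀ k : ℕ, |g k| ≤ M := by
    rintro ⟨M, hM⟩
    set K := max 0 (M + |ℓ|) with hK
    obtain ⟨k, hk⟩ := exists_nat_gt (max 1 (K^2))
    have hk1 : 1 ≤ k := by
      have : (1:ℝ) < k := lt_of_le_of_lt (le_max_left _ _) hk
      exact_mod_cast this.le
    have hKk : K^2 < (k:ℝ) := lt_of_le_of_lt (le_max_right _ _) hk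
    have hKs : K < Real.sqrt k :=
      (Real.lt_sqrt (le_max_left 0 (M + |ℓ|))).mpr hKk
    have hgk := part2 k hk1
    have habs : |(-1 : ℝ) ^ (k + 1) * (Real.sqrt (k + 1) + Real.sqrt k)|
        = Real.sqrt (k + 1) + Real.sqrt k := by
      rw [abs_mul, abs_pow, abs_neg, abs_one, one_pow, one_mul,
        abs_of_nonneg (by positivity)]
    have hlow : Real.sqrt (k + 1) + Real.sqrt k - |ℓ| ≤ |g k| := by
      have : Real.sqrt (k + 1) + Real.sqrt k
          ≤ |g k| + |ℓ| := by
        calc Real.sqrt (k + 1) + Real.sqrt k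
            = |(-1 : ℝ) ^ (k + 1) * (Real.sqrt (k + 1) + Real.sqrt k)| := habs.symm
          _ = |g k - ℓ| := by rw [hgk]; ring_nf
          _ ≤ |g k| + |ℓ| := abs_sub _ _
      linarith
    have h1 : Real.sqrt ((k:ℝ)+1) ≥ 0 := Real.sqrt_nonneg _
    have : M < |g k| := by
      have hMK : M + |ℓ| ≤ K := le_max_right _ _
      push_cast at hlow
      nlinarith
    exact absurd (hM k) (not_le.mpr this)
  refine ⟨part1, part2, part3, ?_⟩
  intro hT
  obtain ⟨A, hA⟩ := hT.bddAbove_range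
  obtain ⟨B, hB⟩ := hT.bddBelow_range
  exact part3 ⟨max A (-B), fun k => abs_le.mpr
    ⟨by have h1 := hB (Set.mem_range_self k); have h2 := le_max_right A (-B); linarith,
     le_trans (hA (Set.mem_range_self k)) (le_max_left _ _)⟩⟩
end

section
/- Define φ_k := k² for k ≥ 1, h_1 := 1, h_{k+1} := (φ_k/(1+φ_k)) h_k, and g_k := h_{k+1} + φ_k(h_{k+1} − h_k). Then g_k = 0 for all k ≥ 1, yet h_k → π/sinh(π) > 0. In particular, the divergence condition ∑ 1/φ_k = +∞ cannot be dropped from the BCCH Lemma. -/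
open Filter

noncomputable def bcchP (n : ℕ) : ℝ :=
  ∏ j ∈ Finset.range n, ((1 : ℝ) + 1 / ((j : ℝ) + 1) ^ 2)

lemma bcchP_pos (n : ℕ) : 0 < bcchP n := by
  apply Finset.prod_pos
  intro j _
  positivity

lemma bcchP_tendsto :
    Tendsto bcchP atTop (nhds (Real.sinh Real.pi / Real.pi)) := by
  have key : Tendsto (fun n : ℕ => Real.pi * bcchP n) atTop (nhds (Real.sinh Real.pi)) := by
    have := (Complex.continuous_im.tendsto _).comp (Complex.tendsto_euler_sin_prod Complex.I)
    have heq : ∀ n : ℕ,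
        ((Complex.im ∘ fun n : ℕ => (Real.pi : ℂ) * Complex.I *
          ∏ j ∈ Finset.range n, ((1 : ℂ) - Complex.I ^ 2 / ((j : ℂ) + 1) ^ 2)) n)
          = Real.pi * bcchP n := by
      intro n
      have hprod : (∏ j ∈ Finset.range n, ((1 : ℂ) - Complex.I ^ 2 / ((j : ℂ) + 1) ^ 2))
          = ((bcchP n : ℝ) : ℂ) := by
        rw [bcchP]
        push_cast
        apply Finset.prod_congr rfl
        intro j _
        rw [Complex.I_sq]
        ring
      simp only [Function.comp_apply, hprod]
      have : (Real.pi : ℂ) * Complex.I * ((bcchP n : ℝ) : ℂ)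
          = ((Real.pi * bcchP n : ℝ) : ℂ) * Complex.I := by push_cast; ring
      rw [this, Complex.mul_I_im, Complex.ofReal_re]
    have hsin : (Complex.sin ((Real.pi : ℂ) * Complex.I)).im = Real.sinh Real.pi := by
      rw [Complex.sin_mul_I]
      simp [Complex.mul_I_im, Complex.sinh_ofReal_re]
    rw [← hsin]
    exact this.congr heq
  have h2 : Tendsto (fun n : ℕ => Real.pi⁻¹ * (Real.pi * bcchP n)) atTop
      (nhds (Real.pi⁻¹ * Real.sinh Real.pi)) := key.const_mul _
  rw [div_eq_inv_mul]
  refine Tendsto.congr (fun n => ?_) h2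
  field_simp

theorem bcch_divergence_condition_needed (h g : ℕ → ℝ)
    (hh1 : h 1 = 1)
    (hrec : ∀ k : ℕ, 1 ≤ k → h (k + 1) = ((k : ℝ) ^ 2 / (1 + (k : ℝ) ^ 2)) * h k)
    (hg : ∀ k : ℕ, g k = h (k + 1) + (k : ℝ) ^ 2 * (h (k + 1) - h k)) :
    (∀ k : ℕ, 1 ≤ k → g k = 0) ∧
    Tendsto h atTop (nhds (Real.pi / Real.sinh Real.pi)) ∧
    0 < Real.pi / Real.sinh Real.pi := by
  have hsinh : 0 < Real.sinh Real.pi := Real.sinh_pos_iff.mpr Real.pi_pos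
  refine ⟨?_, ?_, div_pos Real.pi_pos hsinh⟩
  · intro k hk
    rw [hg k, hrec k hk]
    have hk2 : (1 : ℝ) + (k : ℝ) ^ 2 ≠ 0 := by positivity
    field_simp
    ring
  · -- h (n+1) = (bcchP n)⁻¹
    have hval : ∀ n : ℕ, h (n + 1) = (bcchP n)⁻¹ := by
      intro n
      induction n with
      | zero => simp [hh1, bcchP]
      | succ m ih =>
        rw [hrec (m + 1) (Nat.le_add_left 1 m), ih]
        have hP : bcchP (m + 1) = bcchP m * ((1 : ℝ) + 1 / ((m : ℝ) + 1) ^ 2) := by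
          rw [bcchP, Finset.prod_range_succ]; rfl
        have hm1 : ((m : ℝ) + 1) ≠ 0 := by positivity
        have hPm : bcchP m ≠ 0 := (bcchP_pos m).ne'
        rw [hP, mul_inv, mul_comm]
        push_cast
        congr 1
        rw [eq_comm, inv_eq_iff_eq_inv, eq_comm]
        field_simp
        ring
    have hlim : Tendsto (fun n : ℕ => (bcchP n)⁻¹) atTop
        (nhds (Real.pi / Real.sinh Real.pi)) := by
      have := bcchP_tendsto.inv₀ (by positivity)
      simpa [inv_div] using this
    have hlim2 : Tendsto (fun k : ℕ => (bcchP (k - 1))⁻¹) atTop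
        (nhds (Real.pi / Real.sinh Real.pi)) :=
      hlim.comp (tendsto_sub_atTop_nat 1)
    apply hlim2.congr'
    filter_upwards [eventually_ge_atTop 1] with k hk
    obtain ⟨m, rfl⟩ := Nat.exists_eq_add_of_le hk
    simp [hval, add_comm 1 m]
end

section
/- Let X be a real Hilbert space and (x_k) a bounded sequence in X such that for any two weak cluster points w₁, w₂ of (x_k), the real sequence (⟨x_k, w₁ − w₂⟩)_k converges. Then (x_k) converges weakly. -/
open Filter
open scoped RealInnerProductSpace

/-- `w` is a weak cluster point of the sequence `x`. -/
def IsWeakClusterPoint {X : Type*} [NormedAddCommGroup X] [InnerProductSpace ℝ X]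
    (x : ℕ → X) (w : X) : Prop :=
  ∃ φ : ℕ → ℕ, StrictMono φ ∧
    ∀ y : X, Tendsto (fun k => ⟪x (φ k), y⟫) atTop (nhds ⟪w, y⟫)

lemma exists_weak_cluster {X : Type*} [NormedAddCommGroup X] [InnerProductSpace ℝ X]
    [CompleteSpace X] (x : ℕ → X) (M : ℝ) (hM : ∀ k, ‖x k‖ ≤ M) :
    ∃ w, IsWeakClusterPoint x w := by
  have hM0 : 0 ≤ M := le_trans (norm_nonneg _) (hM 0)
  -- product compactness
  set C := M * M with hC
  have hS : IsSeqCompact (Set.univ.pi (fun _ : ℕ => Set.Icc (-C) C)) :=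
    (isCompact_univ_pi (fun _ => isCompact_Icc)).isSeqCompact
  have hmem : ∀ k, (fun n => ⟪x k, x n⟫) ∈ Set.univ.pi (fun _ : ℕ => Set.Icc (-C) C) := by
    intro k n _
    have := abs_real_inner_le_norm (x k) (x n)
    have hb : |⟪x k, x n⟫| ≤ C := le_trans this (mul_le_mul (hM k) (hM n) (norm_nonneg _) hM0)
    exact abs_le.mp hb
  obtain ⟨g, -, φ, hφ, hconv⟩ := hS hmem
  have hpt : ∀ n, Tendsto (fun k => ⟪x (φ k), x n⟫) atTop (nhds (g n)) := by
    intro n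
    have := (tendsto_pi_nhds.mp hconv) n
    exact this
  -- limits on the span
  have hspan : ∀ z ∈ Submodule.span ℝ (Set.range x),
      ∃ l, Tendsto (fun k => ⟪x (φ k), z⟫) atTop (nhds l) := by
    intro z hz
    induction hz using Submodule.span_induction with
    | mem z hz =>
      obtain ⟨n, rfl⟩ := hz
      exact ⟨g n, hpt n⟩
    | zero => exact ⟨0, by simpa using tendsto_const_nhds⟩
    | add u v _ _ hu hv =>
      obtain ⟨lu, hlu⟩ := hu; obtain ⟨lv, hlv⟩ := hv
      exact ⟨lu + lv, by simpa [inner_add_right] using hlu.add hlv⟩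
    | smul c u _ hu =>
      obtain ⟨lu, hlu⟩ := hu
      exact ⟨c * lu, by simpa [inner_smul_right] using hlu.const_mul c⟩
  -- limits everywhere
  have hall : ∀ y : X, ∃ l, Tendsto (fun k => ⟪x (φ k), y⟫) atTop (nhds l) := by
    intro y
    set K := (Submodule.span ℝ (Set.range x)).topologicalClosure with hK
    have hxK : ∀ k, x k ∈ K :=
      fun k => Submodule.le_topologicalClosure _ (Submodule.subset_span ⟨k, rfl⟩)
    haveI : CompleteSpace K := (Submodule.isClosed_topologicalClosure _).completeSpace_coe
    set p : X := (Submodule.orthogonalProjectionOnto K y : X) with hp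
    have horth : ∀ k, ⟪x (φ k), y⟫ = ⟪x (φ k), p⟫ := by
      intro k
      have h1 : y - p ∈ Kᗮ := Submodule.sub_starProjection_mem_orthogonal (K := K) y
      have h2 : ⟪x (φ k), y - p⟫ = 0 :=
        (Submodule.mem_orthogonal K (y - p)).mp h1 _ (hxK (φ k))
      have := inner_sub_right (𝕜 := ℝ) (x (φ k)) y p
      rw [h2] at this
      linarith
    -- Cauchy
    have hcauchy : CauchySeq (fun k => ⟪x (φ k), p⟫) := by
      rw [Metric.cauchySeq_iff]
      intro ε hε
      have hpK : p ∈ closure ((Submodule.span ℝ (Set.range x)) : Set X) := by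
        have hm : p ∈ K := (Submodule.orthogonalProjectionOnto K y).2
        rw [hK] at hm
        rwa [← Submodule.topologicalClosure_coe]
      obtain ⟨z, hzmem, hzclose⟩ := Metric.mem_closure_iff.mp hpK (ε / (3 * (M + 1)))
        (by positivity)
      obtain ⟨l, hl⟩ := hspan z hzmem
      have hzc : CauchySeq (fun k => ⟪x (φ k), z⟫) := hl.cauchySeq
      rw [Metric.cauchySeq_iff] at hzc
      obtain ⟨N, hN⟩ := hzc (ε / 3) (by positivity)
      refine ⟨N, fun m hm n hn => ?_⟩
      have hbd : ∀ k, |⟪x (φ k), p⟫ - ⟪x (φ k), z⟫| ≤ ε / 3 := by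
        intro k
        have h1 : ⟪x (φ k), p⟫ - ⟪x (φ k), z⟫ = ⟪x (φ k), p - z⟫ := by
          rw [inner_sub_right]
        rw [h1]
        calc |⟪x (φ k), p - z⟫| ≤ ‖x (φ k)‖ * ‖p - z‖ := abs_real_inner_le_norm _ _
        _ ≤ M * (ε / (3 * (M + 1))) := by
            apply mul_le_mul (hM _) _ (norm_nonneg _) hM0
            rw [← dist_eq_norm]
            exact hzclose.le
        _ ≤ ε / 3 := by
            have heq : M * (ε / (3 * (M + 1))) = M * ε / (3 * (M + 1)) := by ring
            rw [heq, div_le_div_iff₀ (by positivity) (by norm_num)]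
            nlinarith
      have h2 := hN m hm n hn
      rw [Real.dist_eq] at h2 ⊢
      calc |⟪x (φ m), p⟫ - ⟪x (φ n), p⟫|
          ≤ |⟪x (φ m), p⟫ - ⟪x (φ m), z⟫| + |⟪x (φ m), z⟫ - ⟪x (φ n), z⟫|
            + |⟪x (φ n), z⟫ - ⟪x (φ n), p⟫| := by
            have := abs_sub_le (⟪x (φ m), p⟫) (⟪x (φ m), z⟫) (⟪x (φ n), p⟫)
            have := abs_sub_le (⟪x (φ m), z⟫) (⟪x (φ n), z⟫) (⟪x (φ n), p⟫)
            linarith [abs_sub_le (⟪x (φ m), p⟫) (⟪x (φ m), z⟫) (⟪x (φ n), p⟫),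
              abs_sub_le (⟪x (φ m), z⟫) (⟪x (φ n), z⟫) (⟪x (φ n), p⟫)]
        _ < ε := by
            have := hbd m
            have := hbd n
            rw [abs_sub_comm (⟪x (φ n), z⟫)] at *
            linarith [hbd m, hbd n, h2]

    obtain ⟨l, hl⟩ := cauchySeq_tendsto_of_complete hcauchy
    exact ⟨l, by simpa [horth] using hl⟩
  -- construct the weak limit via Riesz
  choose L hL using hall
  have hadd : ∀ u v, L (u + v) = L u + L v := by
    intro u v
    refine tendsto_nhds_unique (hL (u + v)) ?_
    simpa [inner_add_right] using (hL u).add (hL v)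
  have hsmul : ∀ (c : ℝ) u, L (c • u) = c * L u := by
    intro c u
    refine tendsto_nhds_unique (hL (c • u)) ?_
    simpa [inner_smul_right] using (hL u).const_mul c
  have hbound : ∀ y, |L y| ≤ M * ‖y‖ := by
    intro y
    have : Tendsto (fun k => |⟪x (φ k), y⟫|) atTop (nhds |L y|) := (hL y).abs
    refine le_of_tendsto this (Eventually.of_forall fun k => ?_)
    exact le_trans (abs_real_inner_le_norm _ _)
      (mul_le_mul_of_nonneg_right (hM _) (norm_nonneg _))
  let Lmap : X →L[ℝ] ℝ :=
    LinearMap.mkContinuous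
      { toFun := L, map_add' := hadd, map_smul' := hsmul } M
      (fun y => by simpa [Real.norm_eq_abs] using hbound y)
  refine ⟨(InnerProductSpace.toDual ℝ X).symm Lmap, φ, hφ, fun y => ?_⟩
  rw [InnerProductSpace.toDual_symm_apply]
  exact hL y

theorem bounded_salzo_weakly_convergent
    {X : Type*} [NormedAddCommGroup X] [InnerProductSpace ℝ X] [CompleteSpace X]
    (x : ℕ → X) (hbd : ∃ M : ℝ, ∀ k, ‖x k‖ ≤ M)
    (hsalzo : ∀ w₁ w₂ : X, IsWeakClusterPoint x w₁ → IsWeakClusterPoint x w₂ →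
      ∃ l : ℝ, Tendsto (fun k => ⟪x k, w₁ - w₂⟫) atTop (nhds l)) :
    ∃ s : X, ∀ y : X, Tendsto (fun k => ⟪x k, y⟫) atTop (nhds ⟪s, y⟫) := by
  obtain ⟨M, hM⟩ := hbd
  have huniq : ∀ w₁ w₂ : X, IsWeakClusterPoint x w₁ → IsWeakClusterPoint x w₂ → w₁ = w₂ := by
    intro w₁ w₂ h1 h2
    obtain ⟨l, hl⟩ := hsalzo w₁ w₂ h1 h2
    obtain ⟨φ₁, hφ₁, hc1⟩ := h1
    obtain ⟨φ₂, hφ₂, hc2⟩ := h2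
    have e1 : ⟪w₁, w₁ - w₂⟫ = l :=
      tendsto_nhds_unique (hc1 (w₁ - w₂)) (hl.comp hφ₁.tendsto_atTop)
    have e2 : ⟪w₂, w₁ - w₂⟫ = l :=
      tendsto_nhds_unique (hc2 (w₁ - w₂)) (hl.comp hφ₂.tendsto_atTop)
    have h0 : ⟪w₁ - w₂, w₁ - w₂⟫ = 0 := by
      rw [inner_sub_left]; linarith
    have := inner_self_eq_zero.mp h0
    exact sub_eq_zero.mp this
  obtain ⟨w, hw⟩ := exists_weak_cluster x M hM
  refine ⟨w, fun y => ?_⟩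
  apply tendsto_of_subseq_tendsto
  intro ns hns
  obtain ⟨ms1, hms1, hcomp⟩ := strictMono_subseq_of_tendsto_atTop hns
  obtain ⟨w', φ, hφ, hc⟩ :=
    exists_weak_cluster (fun k => x (ns (ms1 k))) M (fun k => hM _)
  have hw' : IsWeakClusterPoint x w' :=
    ⟨fun k => ns (ms1 (φ k)), hcomp.comp hφ, fun z => hc z⟩
  have hwe : w' = w := huniq w' w hw' hw
  exact ⟨fun n => ms1 (φ n), by rw [← hwe]; exact hc y⟩
end

section
/- Let X be a real Hilbert space, f : X → ℝ convex and β-smooth (gradient β-Lipschitz), g : X → (−∞,+∞] convex, lsc, proper, F := f + g, and T := Prox_{g/β} ∘ (Id − (1/β)∇f). Then for all x, y ∈ X, setting y₊ := T y, one has F(x) − F(y₊) ≥ (β/2)‖x − y₊‖² − (β/2)‖x − y‖². -/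
open Filter

section Aux
open Set

variable {X : Type*} [NormedAddCommGroup X] [InnerProductSpace ℝ X] [CompleteSpace X]

local notation "⟪" x ", " y "⟫" => @inner ℝ _ _ x y

private lemma line_deriv_aux (f : X → ℝ) (f' : X → X) (hf' : ∀ x, HasGradientAt f (f' x) x)
    (a v : X) (t : ℝ) :
    HasDerivAt (fun s : ℝ => f (a + s • v)) ⟪f' (a + t • v), v⟫ t := by
  have hline : HasDerivAt (fun s : ℝ => a + s • v) v t := by
    simpa using ((hasDerivAt_id t).smul_const v).const_add a
  have H := hasGradientAt_iff_hasFDerivAt.mp (hf' (a + t • v))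
  have := H.comp_hasDerivAt t hline
  simp only [InnerProductSpace.toDual_apply_apply] at this
  exact this

private lemma descent_lemma_aux (β : ℝ) (hβ : 0 < β) (f : X → ℝ) (f' : X → X)
    (hf' : ∀ x, HasGradientAt f (f' x) x)
    (hlip : LipschitzWith (Real.toNNReal β) f') (a b : X) :
    f b ≤ f a + ⟪f' a, b - a⟫ + β / 2 * ‖b - a‖ ^ 2 := by
  set v := b - a with hv
  set h : ℝ → ℝ := fun t => f (a + t • v) - t * ⟪f' a, v⟫ - β / 2 * t ^ 2 * ‖v‖ ^ 2 with hh
  have hd : ∀ t : ℝ, HasDerivAt h (⟪f' (a + t • v), v⟫ - ⟪f' a, v⟫ - β * t * ‖v‖ ^ 2) t := by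
    intro t
    have h1 := line_deriv_aux f f' hf' a v t
    have h2 : HasDerivAt (fun s : ℝ => s * ⟪f' a, v⟫) ⟪f' a, v⟫ t := by
      simpa using (hasDerivAt_id t).mul_const (⟪f' a, v⟫ : ℝ)
    have h3 : HasDerivAt (fun s : ℝ => β / 2 * s ^ 2 * ‖v‖ ^ 2) (β * t * ‖v‖ ^ 2) t := by
      have := ((hasDerivAt_pow 2 t).const_mul (β / 2)).mul_const (‖v‖ ^ 2)
      exact this.congr_deriv (by ring)
    exact (h1.sub h2).sub h3
  have hanti : AntitoneOn h (Icc (0:ℝ) 1) := by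
    apply antitoneOn_of_deriv_nonpos (convex_Icc 0 1)
    · exact fun t _ => ((hd t).differentiableAt).continuousAt.continuousWithinAt
    · exact fun t _ => ((hd t).differentiableAt).differentiableWithinAt
    · intro t ht
      rw [interior_Icc] at ht
      rw [(hd t).deriv]
      have hdist : ‖f' (a + t • v) - f' a‖ ≤ β * (t * ‖v‖) := by
        have hda : dist (a + t • v) a = ‖t • v‖ := by simp [dist_eq_norm]
        have := hlip.dist_le_mul (a + t • v) a
        rw [hda] at this
        calc ‖f' (a + t • v) - f' a‖ = dist (f' (a + t • v)) (f' a) := (dist_eq_norm _ _).symm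
          _ ≤ (Real.toNNReal β : ℝ) * ‖t • v‖ := this
          _ = β * (t * ‖v‖) := by
              rw [Real.coe_toNNReal _ hβ.le, norm_smul, Real.norm_eq_abs,
                abs_of_nonneg ht.1.le]
      have hip : ⟪f' (a + t • v) - f' a, v⟫ ≤ ‖f' (a + t • v) - f' a‖ * ‖v‖ :=
        real_inner_le_norm _ _
      rw [inner_sub_left] at hip
      nlinarith [norm_nonneg v, norm_nonneg (f' (a + t • v) - f' a)]
  have := hanti (Set.left_mem_Icc.mpr zero_le_one) (Set.right_mem_Icc.mpr zero_le_one) zero_le_one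
  simp only [hh, one_smul, one_pow, zero_smul, add_zero, zero_mul, sub_zero, one_mul,
    zero_pow, mul_zero] at this
  have hab : a + v = b := by rw [hv]; abel
  rw [hab] at this
  linarith

private lemma convex_lb_aux (f : X → ℝ) (hf : ConvexOn ℝ Set.univ f) (f' : X → X)
    (hf' : ∀ x, HasGradientAt f (f' x) x) (a b : X) :
    f a + ⟪f' a, b - a⟫ ≤ f b := by
  set φ : ℝ → ℝ := fun t => f (a + t • (b - a)) with hφdef
  have hφconv : ConvexOn ℝ Set.univ φ := by
    have := hf.comp_affineMap (AffineMap.lineMap a b : ℝ →ᵃ[ℝ] X)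
    simp only [Set.preimage_univ] at this
    have e : φ = f ∘ AffineMap.lineMap a b := by
      funext t
      simp [hφdef, AffineMap.lineMap_apply, add_comm]
    rw [e]; exact this
  have hder : HasDerivAt φ ⟪f' a, b - a⟫ 0 := by
    have := line_deriv_aux f f' hf' a (b - a) 0
    simpa using this
  have := hφconv.le_slope_of_hasDerivWithinAt_Ioi (Set.mem_univ 0) (Set.mem_univ 1)
    zero_lt_one hder.hasDerivWithinAt
  have hs : slope φ 0 1 = f b - f a := by
    simp [slope, hφdef]
  rw [hs] at this
  linarith

private lemma quad_id_aux (a b : ℝ) (hab : a + b = 1) (A B p : X) :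
    ‖a • A + b • B - p‖ ^ 2 = a * ‖A - p‖ ^ 2 + b * ‖B - p‖ ^ 2 - a * b * ‖A - B‖ ^ 2 := by
  have hb : b = 1 - a := by linarith
  subst hb
  have h : a • A + (1 - a) • B - p = a • (A - p) + (1 - a) • (B - p) := by module
  rw [h]
  have e1 : ∀ z : X, ‖z‖ ^ 2 = ⟪z, z⟫ := fun z => (real_inner_self_eq_norm_sq z).symm
  rw [e1, e1, e1, e1]
  simp only [inner_add_left, inner_add_right, inner_sub_left, inner_sub_right,
    real_inner_smul_left, real_inner_smul_right]
  rw [real_inner_comm p A, real_inner_comm p B, real_inner_comm B A]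
  ring

private lemma quad_expand_aux (β : ℝ) (hβ : 0 < β) (u y w : X) :
    β / 2 * ‖u - (y - β⁻¹ • w)‖ ^ 2
      = β / 2 * ‖u - y‖ ^ 2 + ⟪w, u - y⟫ + 1 / (2 * β) * ‖w‖ ^ 2 := by
  have h : u - (y - β⁻¹ • w) = (u - y) + β⁻¹ • w := by abel
  rw [h]
  have e1 : ∀ z : X, ‖z‖ ^ 2 = ⟪z, z⟫ := fun z => (real_inner_self_eq_norm_sq z).symm
  rw [e1, e1, e1]
  simp only [inner_add_left, inner_add_right, real_inner_smul_left, real_inner_smul_right]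
  rw [real_inner_comm (u - y) w]
  have hβ' : β ≠ 0 := hβ.ne'
  field_simp
  ring

end Aux

theorem prox_gradient_sufficient_decrease
    {X : Type*} [NormedAddCommGroup X] [InnerProductSpace ℝ X] [CompleteSpace X]
    (β : ℝ) (hβ : 0 < β)
    (f : X → ℝ) (hf : ConvexOn ℝ Set.univ f)
    (f' : X → X) (hf' : ∀ x, HasGradientAt f (f' x) x)
    (hlip : LipschitzWith (Real.toNNReal β) f')
    (g : X → EReal)
    (hgconv : ∀ x y : X, ∀ a b : ℝ, 0 ≤ a → 0 ≤ b → a + b = 1 →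
      g (a • x + b • y) ≤ (a : EReal) * g x + (b : EReal) * g y)
    (hglsc : LowerSemicontinuous g)
    (hg_ne_bot : ∀ x, g x ≠ ⊥) (hg_proper : ∃ x, g x ≠ ⊤)
    (T : X → X)
    (hT : ∀ y u : X,
      g (T y) + (((β / 2) * ‖T y - (y - β⁻¹ • f' y)‖ ^ 2 : ℝ) : EReal)
        ≤ g u + (((β / 2) * ‖u - (y - β⁻¹ • f' y)‖ ^ 2 : ℝ) : EReal))
    (F : X → EReal) (hF : ∀ x, F x = (f x : EReal) + g x) :
    ∀ x y : X,
      F (T y) + (((β / 2) * ‖x - T y‖ ^ 2 - (β / 2) * ‖x - y‖ ^ 2 : ℝ) : EReal)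
        ≤ F x := by
  intro x y
  by_cases hgx : g x = ⊤
  · rw [hF x, hgx, EReal.coe_add_top]
    exact le_top
  -- g x is finite
  have hgxb := hg_ne_bot x
  set Gx : ℝ := (g x).toReal with hGx
  have hgx_eq : g x = (Gx : EReal) := (EReal.coe_toReal hgx hgxb).symm
  set p : X := y - β⁻¹ • f' y with hp
  set yp : X := T y with hyp
  -- g (T y) is finite
  have hgyp_top : g yp ≠ ⊤ := by
    intro htop
    have h1 := hT y x
    rw [← hyp, ← hp, htop, EReal.top_add_coe, hgx_eq, ← EReal.coe_add, top_le_iff] at h1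
    exact EReal.coe_ne_top _ h1
  set Gp : ℝ := (g yp).toReal with hGp
  have hgyp_eq : g yp = (Gp : EReal) := (EReal.coe_toReal hgyp_top (hg_ne_bot yp)).symm
  set q1 : ℝ := β / 2 * ‖yp - p‖ ^ 2 with hq1
  set q2 : ℝ := β / 2 * ‖x - p‖ ^ 2 with hq2
  set c : ℝ := β / 2 * ‖x - yp‖ ^ 2 with hc
  have hc0 : 0 ≤ c := by positivity
  -- strong minimality: Gp + q1 + c ≤ Gx + q2
  have hkey : Gp + q1 + c ≤ Gx + q2 := by
    have hstep : ∀ t : ℝ, t ∈ Set.Ioo (0:ℝ) 1 → Gp + q1 + (1 - t) * c ≤ Gx + q2 := by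
      intro t ht
      have hab : (1 - t) + t = 1 := by ring
      set z : X := (1 - t) • yp + t • x with hz
      -- convexity bound on g z
      have hconv := hgconv yp x (1 - t) t (by linarith [ht.2]) ht.1.le hab
      rw [hgyp_eq, hgx_eq, ← EReal.coe_mul, ← EReal.coe_mul, ← EReal.coe_add, ← hz] at hconv
      have hgz_top : g z ≠ ⊤ := fun htop => by
        rw [htop, top_le_iff] at hconv; exact EReal.coe_ne_top _ hconv
      set Gz : ℝ := (g z).toReal with hGz
      have hgz_eq : g z = (Gz : EReal) := (EReal.coe_toReal hgz_top (hg_ne_bot z)).symm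
      rw [hgz_eq] at hconv
      have hconvR : Gz ≤ (1 - t) * Gp + t * Gx := EReal.coe_le_coe_iff.mp hconv
      -- prox inequality at z
      have hTz := hT y z
      rw [← hyp, ← hp, hgyp_eq, hgz_eq, ← EReal.coe_add, ← EReal.coe_add] at hTz
      have hTzR : Gp + β / 2 * ‖yp - p‖ ^ 2 ≤ Gz + β / 2 * ‖z - p‖ ^ 2 :=
        EReal.coe_le_coe_iff.mp hTz
      -- quadratic identity
      have hquad : ‖z - p‖ ^ 2
          = (1 - t) * ‖yp - p‖ ^ 2 + t * ‖x - p‖ ^ 2 - (1 - t) * t * ‖yp - x‖ ^ 2 :=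
        quad_id_aux (1 - t) t hab yp x p
      have hnrev : ‖yp - x‖ = ‖x - yp‖ := norm_sub_rev _ _
      rw [hnrev] at hquad
      rw [hquad] at hTzR
      -- combine and divide by t ^ 2
      have fact1 := mul_le_mul_of_nonneg_left hTzR ht.1.le
      have fact2 := mul_le_mul_of_nonneg_left hconvR ht.1.le
      have h5 : (t * t) * (Gp + q1 + (1 - t) * c) ≤ (t * t) * (Gx + q2) := by
        rw [hq1, hq2, hc]
        nlinarith [fact1, fact2]
      exact le_of_mul_le_mul_left h5 (mul_pos ht.1 ht.1)
    apply le_of_forall_pos_le_add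
    intro ε hε
    set t : ℝ := min (1/2) (ε / (c + 1)) with htd
    have ht0 : 0 < t := lt_min (by norm_num) (div_pos hε (by linarith))
    have ht1 : t < 1 := lt_of_le_of_lt (min_le_left _ _) (by norm_num)
    have htc : t * c ≤ ε := by
      have h6 : t ≤ ε / (c + 1) := min_le_right _ _
      have h7 : t * c ≤ (ε / (c + 1)) * c := by
        apply mul_le_mul_of_nonneg_right h6 hc0
      have h8 : (ε / (c + 1)) * c ≤ ε := by
        rw [div_mul_eq_mul_div, div_le_iff₀ (by linarith : (0:ℝ) < c + 1)]
        nlinarith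
      linarith
    have := hstep t ⟨ht0, ht1⟩
    nlinarith
  -- expansions
  have hexp1 : q1 = β / 2 * ‖yp - y‖ ^ 2 + @inner ℝ _ _ (f' y) (yp - y) + 1 / (2 * β) * ‖f' y‖ ^ 2 := by
    rw [hq1, hp]; exact quad_expand_aux β hβ yp y (f' y)
  have hexp2 : q2 = β / 2 * ‖x - y‖ ^ 2 + @inner ℝ _ _ (f' y) (x - y) + 1 / (2 * β) * ‖f' y‖ ^ 2 := by
    rw [hq2, hp]; exact quad_expand_aux β hβ x y (f' y)
  -- descent lemma and convexity of f
  have hdesc : f yp ≤ f y + @inner ℝ _ _ (f' y) (yp - y) + β / 2 * ‖yp - y‖ ^ 2 :=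
    descent_lemma_aux β hβ f f' hf' hlip y yp
  have hcvx : f y + @inner ℝ _ _ (f' y) (x - y) ≤ f x :=
    convex_lb_aux f hf f' hf' y x
  -- final real inequality
  have hfinal : f yp + Gp + (β / 2 * ‖x - yp‖ ^ 2 - β / 2 * ‖x - y‖ ^ 2) ≤ f x + Gx := by
    rw [hexp1, hexp2] at hkey
    rw [hc] at hkey
    linarith
  -- back to EReal
  rw [hF x, hF (T y), hgx_eq, ← hyp, hgyp_eq, ← EReal.coe_add, ← EReal.coe_add,
    ← EReal.coe_add, EReal.coe_le_coe_iff]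
  linarith
end
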